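/- Investment incentives under associated policies: Fix a game (X, λ_w, p, G, v_q, v_u, ω) with likelihood values 0 < l_1 < … < l_n (l_0 := 0), and define WW(l_m) := ω Σ_{x_𝒴 : p(x_𝒴|q)/p(x_𝒴|u) > l_m} (p(x_𝒴|q) − p(x_𝒴|u)) for m = 0,1,…,n, extended to a piecewise-linear function WW : [0, l_n] → ℝ interpolating the points (l_m, WW(l_m)). Then for any group i and any within-group decision policy d(i) associated with a likelihood mixture ℓ ∈ [0, l_n], the investment incentive satisfies ω Σ_{x∈X} d(i,x)(p(x|i,q) − p(x|i,u)) = WW(ℓ). In particular, under any fair decision policy the investment incentive is the same for both groups. -/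

import Mathlib

/-!
Formalization of the Coate–Loury statistical discrimination model with
machine-learning (contractible) beliefs, following Zhu,
"The Impact of Equal Opportunity on Statistical Discrimination".
-/

open scoped BigOperators
open MeasureTheory

noncomputable section

attribute [local instance] Classical.propDecidable

/-- Group identities `I = {w, b}`. -/
inductive GrpI
  | w
  | b
deriving DecidableEq

instance : Fintype GrpI := ⟨{GrpI.w, GrpI.b}, fun x => by cases x <;> simp⟩

/-- Classes `Y = {q, u}` (qualified / unqualified). -/
inductive Cls
  | q
  | u
deriving DecidableEq

instance : Fintype Cls := ⟨{Cls.q, Cls.u}, fun x => by cases x <;> simp⟩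

/-- A game `(X, λ_w, p, G, v_q, v_u, ω)` of the Coate–Loury model.  The set of
other features is the finite product `X = X_1 × ⋯ × X_N`, encoded as the pi type
`(j : Fin N) → Xs j`.  The statistical model (Assumption 1) is encoded through a
nonempty subset `Ysub ⊆ {1, …, N}` together with the factorization
`p(x | i, y) = pY(x_𝒴 | y) · pC(x_{-𝒴} | i, x_𝒴)`.  The cost distribution is
given by an everywhere positive density `g` with `∫ g = 1` and `∫ |c| g(c) dc < ∞`. -/
structure Game (N : ℕ) (Xs : Fin N → Type) [∀ j, Fintype (Xs j)]
    [∀ j, Nonempty (Xs j)] where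
  lamw : ℝ
  lamw_pos : 0 < lamw
  lamw_lt_one : lamw < 1
  Ysub : Finset (Fin N)
  Ysub_nonempty : Ysub.Nonempty
  pY : ((j : Ysub) → Xs j.1) → Cls → ℝ
  pC : GrpI → ((j : Fin N) → Xs j) → ℝ
  pY_pos : ∀ xY y, 0 < pY xY y
  pC_pos : ∀ i x, 0 < pC i x
  pY_sum : ∀ y, ∑ xY, pY xY y = 1
  pC_sum : ∀ (i : GrpI) (xY : (j : Ysub) → Xs j.1),
    ∑ x ∈ Finset.univ.filter
        (fun x : (j : Fin N) → Xs j => (fun j : Ysub => x j.1) = xY),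
      pC i x = 1
  g : ℝ → ℝ
  g_pos : ∀ c, 0 < g c
  g_int : Integrable g
  g_norm : (∫ c, g c) = 1
  g_abs_int : Integrable fun c => |c| * g c
  vq : ℝ
  vu : ℝ
  om : ℝ
  vq_pos : 0 < vq
  vu_pos : 0 < vu
  om_pos : 0 < om

section Policies

variable {N : ℕ} {Xs : Fin N → Type}

/-- A decision policy `d : I × X → [0,1]`. -/
def IsPolicy (d : GrpI → ((j : Fin N) → Xs j) → ℝ) : Prop :=
  ∀ i x, d i x ∈ Set.Icc (0 : ℝ) 1

/-- A decision policy when data is color-blind, `d_cb : X → [0,1]`. -/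
def IsCbPolicy (dcb : ((j : Fin N) → Xs j) → ℝ) : Prop :=
  ∀ x, dcb x ∈ Set.Icc (0 : ℝ) 1

/-- `S ⊆ {1, …, N}` has the dependence property for the belief `f`:
`f` depends on `(i, x)` only up to `(i, x_S)`. -/
def DepProp {I : Type} (f : I → ((j : Fin N) → Xs j) → ℝ)
    (S : Finset (Fin N)) : Prop :=
  ∀ (i : I) (x x' : (j : Fin N) → Xs j), (∀ j ∈ S, x j = x' j) → f i x = f i x'

/-- The minimal subset `Ŷ(f)` with the dependence property. -/
def minDep {I : Type} (f : I → ((j : Fin N) → Xs j) → ℝ) : Finset (Fin N) :=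
  Finset.univ.filter fun j => ∀ S : Finset (Fin N), DepProp f S → j ∈ S

variable [∀ j, Fintype (Xs j)]

/-- Full-support probability distributions on `I × X` (the set `Δ°(I × X)`). -/
def FullSupp (μ : GrpI → ((j : Fin N) → Xs j) → ℝ) : Prop :=
  (∀ i x, 0 < μ i x) ∧ ∑ i, ∑ x, μ i x = 1

/-- Beliefs valued in `(0, 1)`. -/
def OpenBelief (f : GrpI → ((j : Fin N) → Xs j) → ℝ) : Prop :=
  ∀ i x, f i x ∈ Set.Ioo (0 : ℝ) 1

/-- Acceptance rate of group `i`. -/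
def AR (i : GrpI) (d μ : GrpI → ((j : Fin N) → Xs j) → ℝ) : ℝ :=
  (∑ x, d i x * μ i x) / ∑ x, μ i x

/-- True positive rate of group `i`. -/
def TP (i : GrpI) (d μ f : GrpI → ((j : Fin N) → Xs j) → ℝ) : ℝ :=
  (∑ x, d i x * μ i x * f i x) / ∑ x, μ i x * f i x

/-- The equal opportunity control `k(X, μ, f)`. -/
def EOset (μ f : GrpI → ((j : Fin N) → Xs j) → ℝ) :
    Set (GrpI → ((j : Fin N) → Xs j) → ℝ) :=
  {d | IsPolicy d ∧ TP GrpI.w d μ f = TP GrpI.b d μ f}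

/-- The color-blind control: all color-blind decision policies. -/
def CBset : Set (GrpI → ((j : Fin N) → Xs j) → ℝ) :=
  {d | IsPolicy d ∧ ∀ x, d GrpI.w x = d GrpI.b x}

/-- The no proxies control: policies depending on `(i,x)` only through `x_{Ŷ(f)}`. -/
def NoProxies (_μ f : GrpI → ((j : Fin N) → Xs j) → ℝ) :
    Set (GrpI → ((j : Fin N) → Xs j) → ℝ) :=
  {d | IsPolicy d ∧
    ∀ i i' x x', (∀ j ∈ minDep f, x j = x' j) → d i x = d i' x'}

/-- `ℓ²` distance between decision policies. -/
def polDist (d d' : GrpI → ((j : Fin N) → Xs j) → ℝ) : ℝ :=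
  Real.sqrt (∑ i, ∑ x, (d i x - d' i x) ^ 2)

/-- `ℓ²` distance between pairs `(μ, f)`. -/
def pairDist (μ f μ' f' : GrpI → ((j : Fin N) → Xs j) → ℝ) : ℝ :=
  Real.sqrt ((∑ i, ∑ x, (μ i x - μ' i x) ^ 2) + ∑ i, ∑ x, (f i x - f' i x) ^ 2)

/-- `ℓ²` distance between strategy profiles `(c̄, d)`. -/
def profDist (c : GrpI → ℝ) (d : GrpI → ((j : Fin N) → Xs j) → ℝ)
    (c' : GrpI → ℝ) (d' : GrpI → ((j : Fin N) → Xs j) → ℝ) : ℝ :=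
  Real.sqrt ((∑ i, (c i - c' i) ^ 2) + ∑ i, ∑ x, (d i x - d' i x) ^ 2)

end Policies

/-- Upper hemicontinuity of a correspondence on a set. -/
def UpperHemicontinuousOn' {α β : Type*} [TopologicalSpace α] [TopologicalSpace β]
    (F : α → Set β) (S : Set α) : Prop :=
  ∀ a ∈ S, ∀ V : Set β, IsOpen V → F a ⊆ V → ∀ᶠ a' in nhdsWithin a S, F a' ⊆ V

/-- Lower hemicontinuity of a correspondence on a set. -/
def LowerHemicontinuousOn' {α β : Type*} [TopologicalSpace α] [TopologicalSpace β]
    (F : α → Set β) (S : Set α) : Prop :=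
  ∀ a ∈ S, ∀ V : Set β, IsOpen V → (F a ∩ V).Nonempty →
    ∀ᶠ a' in nhdsWithin a S, (F a' ∩ V).Nonempty

namespace Game

variable {N : ℕ} {Xs : Fin N → Type} [∀ j, Fintype (Xs j)] [∀ j, Nonempty (Xs j)]
variable (Γ : Game N Xs)

/-- Projection `x ↦ x_𝒴`. -/
def proj (x : (j : Fin N) → Xs j) : (j : Γ.Ysub) → Xs j.1 := fun j => x j.1

/-- `p(x | i, y) = p(x_𝒴 | y) · p(x_{-𝒴} | i, x_𝒴)`. -/
def p (i : GrpI) (x : (j : Fin N) → Xs j) (y : Cls) : ℝ :=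
  Γ.pY (Γ.proj x) y * Γ.pC i x

/-- Group probabilities `λ_w`, `λ_b = 1 - λ_w`. -/
def lam : GrpI → ℝ := fun i =>
  match i with
  | GrpI.w => Γ.lamw
  | GrpI.b => 1 - Γ.lamw

/-- The CDF `G` of the cost distribution. -/
def G (c : ℝ) : ℝ := ∫ t in Set.Iic c, Γ.g t

/-- The likelihood function `l(x) = p(x_𝒴 | q) / p(x_𝒴 | u)`. -/
def lhd (x : (j : Fin N) → Xs j) : ℝ :=
  Γ.pY (Γ.proj x) Cls.q / Γ.pY (Γ.proj x) Cls.u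

/-- The likelihood function on `X_𝒴`. -/
def lhdY (xY : (j : Γ.Ysub) → Xs j.1) : ℝ := Γ.pY xY Cls.q / Γ.pY xY Cls.u

/-- The set of likelihood values `{l_1 < … < l_n}`. -/
def LVset : Set ℝ := Set.range Γ.lhd

/-- The assumption that `1` is not a likelihood value
(equivalently, `WW` is single-peaked). -/
def OneNotLV : Prop := (1 : ℝ) ∉ Γ.LVset

/-- The largest likelihood value `l_n`. -/
def lmax : ℝ := sSup Γ.LVset

/-- `⌈ℓ⌉`: the smallest likelihood value `≥ ℓ`. -/
def lceil (ℓ : ℝ) : ℝ := sInf {v | v ∈ Γ.LVset ∧ ℓ ≤ v}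

/-- `⌈ℓ⌉⁻`: the next smallest likelihood value below `⌈ℓ⌉` (or `l_0 = 0`). -/
def lceilm (ℓ : ℝ) : ℝ := sSup (insert 0 {v | v ∈ Γ.LVset ∧ v < Γ.lceil ℓ})

/-- The smallest likelihood value `> ℓ`. -/
def lnext (ℓ : ℝ) : ℝ := sInf {v | v ∈ Γ.LVset ∧ ℓ < v}

/-- The true distribution of features `μ_RE` given cost thresholds `c̄`. -/
def muRE (c : GrpI → ℝ) (i : GrpI) (x : (j : Fin N) → Xs j) : ℝ :=
  Γ.lam i * (Γ.G (c i) * Γ.p i x Cls.q + (1 - Γ.G (c i)) * Γ.p i x Cls.u)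

/-- The true conditional probability (calibrated belief) `f_RE` given `c̄`. -/
def fRE (c : GrpI → ℝ) (i : GrpI) (x : (j : Fin N) → Xs j) : ℝ :=
  Γ.G (c i) * Γ.p i x Cls.q /
    (Γ.G (c i) * Γ.p i x Cls.q + (1 - Γ.G (c i)) * Γ.p i x Cls.u)

/-- Utility `U_i(c̄(i), d(i))` of the representative `i`-applicant. -/
def Uapp (i : GrpI) (ci : ℝ) (di : ((j : Fin N) → Xs j) → ℝ) : ℝ :=
  Γ.om * ∑ x, (Γ.G ci * Γ.p i x Cls.q + (1 - Γ.G ci) * Γ.p i x Cls.u) * di x -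
    ∫ t in Set.Iic ci, t * Γ.g t

/-- Firm utility `U_F(d, μ, f)`. -/
def UF (d μ f : GrpI → ((j : Fin N) → Xs j) → ℝ) : ℝ :=
  ∑ i, ∑ x, d i x * μ i x * (f i x * Γ.vq - (1 - f i x) * Γ.vu)

/-- The color-blind true distribution of features `μ_cb,RE`. -/
def mucbRE (c : GrpI → ℝ) (x : (j : Fin N) → Xs j) : ℝ :=
  Γ.muRE c GrpI.w x + Γ.muRE c GrpI.b x

/-- The color-blind true conditional probability `f_cb,RE`. -/
def fcbRE (c : GrpI → ℝ) (x : (j : Fin N) → Xs j) : ℝ :=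
  (Γ.muRE c GrpI.w x * Γ.fRE c GrpI.w x + Γ.muRE c GrpI.b x * Γ.fRE c GrpI.b x) /
    Γ.mucbRE c x

/-- Firm utility when data is color-blind. -/
def UFcb (dcb μcb fcb : ((j : Fin N) → Xs j) → ℝ) : ℝ :=
  ∑ x, dcb x * μcb x * (fcb x * Γ.vq - (1 - fcb x) * Γ.vu)

/-- `d(i | l_m)`: conditional acceptance probability at likelihood value `lv`. -/
def dcond (i : GrpI) (di : ((j : Fin N) → Xs j) → ℝ) (lv : ℝ) : ℝ :=
  (∑ x ∈ Finset.univ.filter (fun x => Γ.lhd x = lv), Γ.p i x Cls.q * di x) /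
    ∑ x ∈ Finset.univ.filter (fun x => Γ.lhd x = lv), Γ.p i x Cls.q

/-- The within-group policy `d(i)` is associated with the likelihood mixture `ℓ`. -/
def AssociatedWith (i : GrpI) (di : ((j : Fin N) → Xs j) → ℝ) (ℓ : ℝ) : Prop :=
  0 ≤ ℓ ∧ ℓ ≤ Γ.lmax ∧
    ∀ lv ∈ Γ.LVset,
      (Γ.lceil ℓ < lv → Γ.dcond i di lv = 1) ∧
      (lv = Γ.lceil ℓ →
        Γ.dcond i di lv = (Γ.lceil ℓ - ℓ) / (Γ.lceil ℓ - Γ.lceilm ℓ)) ∧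
      (lv < Γ.lceil ℓ → Γ.dcond i di lv = 0)

/-- A decision policy is fair if both within-group policies are associated with
the same likelihood mixture. -/
def Fair (d : GrpI → ((j : Fin N) → Xs j) → ℝ) : Prop :=
  ∃ ℓ, Γ.AssociatedWith GrpI.w (d GrpI.w) ℓ ∧ Γ.AssociatedWith GrpI.b (d GrpI.b) ℓ

/-- `WW(l_m) = ω ∑_{x_𝒴 : l(x_𝒴) > l_m} (p(x_𝒴|q) - p(x_𝒴|u))`. -/
def WWval (t : ℝ) : ℝ :=
  Γ.om * ∑ xY ∈ Finset.univ.filter (fun xY => t < Γ.lhdY xY),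
    (Γ.pY xY Cls.q - Γ.pY xY Cls.u)

/-- The piecewise-linear function `WW` interpolating the points `(l_m, WW(l_m))`. -/
def WW (ℓ : ℝ) : ℝ :=
  if Γ.lceil ℓ = Γ.lceilm ℓ then Γ.WWval (Γ.lceil ℓ)
  else
    (Γ.WWval (Γ.lceilm ℓ) * (Γ.lceil ℓ - ℓ) +
        Γ.WWval (Γ.lceil ℓ) * (ℓ - Γ.lceilm ℓ)) /
      (Γ.lceil ℓ - Γ.lceilm ℓ)

/-- `EĒ(l_m)`: the unique cost with `G(EĒ(l_m)) = 1 / ((v_q/v_u) l_m + 1)`. -/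
def EEbar (lv : ℝ) : ℝ := sInf {cc | 1 / (Γ.vq / Γ.vu * lv + 1) ≤ Γ.G cc}

/-- The correspondence `EE : [0, l_n] ⇒ ℝ`. -/
def EE (ℓ : ℝ) : Set ℝ :=
  if ℓ = 0 then Set.Ici (Γ.EEbar (Γ.lceil 0))
  else if ℓ = Γ.lmax then Set.Iic (Γ.EEbar Γ.lmax)
  else if ℓ ∈ Γ.LVset then Set.Icc (Γ.EEbar (Γ.lnext ℓ)) (Γ.EEbar ℓ)
  else {Γ.EEbar (Γ.lceil ℓ)}

/-- Each representative applicant's cost threshold is a best response to `d`. -/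
def BestResponds (c : GrpI → ℝ) (d : GrpI → ((j : Fin N) → Xs j) → ℝ) : Prop :=
  ∀ (i : GrpI) (c' : ℝ), Γ.Uapp i c' (d i) ≤ Γ.Uapp i (c i) (d i)

/-- An (un-controlled) equilibrium. -/
def IsEquilibrium (c : GrpI → ℝ) (d : GrpI → ((j : Fin N) → Xs j) → ℝ) : Prop :=
  IsPolicy d ∧ Γ.BestResponds c d ∧
    ∀ d', IsPolicy d' →
      Γ.UF d' (Γ.muRE c) (Γ.fRE c) ≤ Γ.UF d (Γ.muRE c) (Γ.fRE c)

/-- A `k`-controlled equilibrium, for the control `(μ, f) ↦ K μ f`. -/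
def IsControlledEq
    (K : (GrpI → ((j : Fin N) → Xs j) → ℝ) → (GrpI → ((j : Fin N) → Xs j) → ℝ) →
      Set (GrpI → ((j : Fin N) → Xs j) → ℝ))
    (c : GrpI → ℝ) (d : GrpI → ((j : Fin N) → Xs j) → ℝ) : Prop :=
  d ∈ K (Γ.muRE c) (Γ.fRE c) ∧ Γ.BestResponds c d ∧
    ∀ d' ∈ K (Γ.muRE c) (Γ.fRE c),
      Γ.UF d' (Γ.muRE c) (Γ.fRE c) ≤ Γ.UF d (Γ.muRE c) (Γ.fRE c)

/-- `𝒮_k(μ, f)`: firm-optimal policies under the control `K` at `(μ, f)`. -/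
def Smax
    (K : (GrpI → ((j : Fin N) → Xs j) → ℝ) → (GrpI → ((j : Fin N) → Xs j) → ℝ) →
      Set (GrpI → ((j : Fin N) → Xs j) → ℝ))
    (μ f : GrpI → ((j : Fin N) → Xs j) → ℝ) :
    Set (GrpI → ((j : Fin N) → Xs j) → ℝ) :=
  {d | d ∈ K μ f ∧ ∀ d' ∈ K μ f, Γ.UF d' μ f ≤ Γ.UF d μ f}

/-- A `k`-controlled `ε`-equilibrium. -/
def IsCtrlEpsEq
    (K : (GrpI → ((j : Fin N) → Xs j) → ℝ) → (GrpI → ((j : Fin N) → Xs j) → ℝ) →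
      Set (GrpI → ((j : Fin N) → Xs j) → ℝ))
    (ε : ℝ) (c : GrpI → ℝ) (d : GrpI → ((j : Fin N) → Xs j) → ℝ) : Prop :=
  ∃ μ f, FullSupp μ ∧ OpenBelief f ∧
    pairDist μ f (Γ.muRE c) (Γ.fRE c) ≤ ε ∧
    Γ.BestResponds c d ∧ d ∈ K μ f ∧ ∀ d' ∈ K μ f, Γ.UF d' μ f ≤ Γ.UF d μ f

/-- Best responses of applicants to a color-blind policy. -/
def BestRespondsCb (c : GrpI → ℝ) (dcb : ((j : Fin N) → Xs j) → ℝ) : Prop :=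
  ∀ (i : GrpI) (c' : ℝ), Γ.Uapp i c' dcb ≤ Γ.Uapp i (c i) dcb

/-- An equilibrium when data is color-blind (unrestricted control). -/
def IsCbEquilibrium (c : GrpI → ℝ) (dcb : ((j : Fin N) → Xs j) → ℝ) : Prop :=
  IsCbPolicy dcb ∧ Γ.BestRespondsCb c dcb ∧
    ∀ dcb', IsCbPolicy dcb' →
      Γ.UFcb dcb' (Γ.mucbRE c) (Γ.fcbRE c) ≤ Γ.UFcb dcb (Γ.mucbRE c) (Γ.fcbRE c)

/-- A `k_cb`-controlled equilibrium when data is color-blind. -/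
def IsCbControlledEq (K : Set (((j : Fin N) → Xs j) → ℝ)) (c : GrpI → ℝ)
    (dcb : ((j : Fin N) → Xs j) → ℝ) : Prop :=
  dcb ∈ K ∧ Γ.BestRespondsCb c dcb ∧
    ∀ dcb' ∈ K,
      Γ.UFcb dcb' (Γ.mucbRE c) (Γ.fcbRE c) ≤ Γ.UFcb dcb (Γ.mucbRE c) (Γ.fcbRE c)

end Game

/-- A control when data is color-blind: for each `X` and each
`(μ_cb, f_cb) ∈ Δ°(X) × (0,1)^X` it specifies a nonempty compact set of
color-blind decision policies. -/
structure CbControl : Type 1 where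
  sets : ∀ (N : ℕ) (Xs : Fin N → Type) [∀ j, Fintype (Xs j)] [∀ j, Nonempty (Xs j)],
    (((j : Fin N) → Xs j) → ℝ) → (((j : Fin N) → Xs j) → ℝ) →
      Set (((j : Fin N) → Xs j) → ℝ)
  nonempty : ∀ (N : ℕ) (Xs : Fin N → Type) [∀ j, Fintype (Xs j)]
    [∀ j, Nonempty (Xs j)] (μ f : ((j : Fin N) → Xs j) → ℝ),
    (∀ x, 0 < μ x) → (∑ x, μ x = 1) → (∀ x, f x ∈ Set.Ioo (0 : ℝ) 1) →
    (sets N Xs μ f).Nonempty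
  compact : ∀ (N : ℕ) (Xs : Fin N → Type) [∀ j, Fintype (Xs j)]
    [∀ j, Nonempty (Xs j)] (μ f : ((j : Fin N) → Xs j) → ℝ),
    (∀ x, 0 < μ x) → (∑ x, μ x = 1) → (∀ x, f x ∈ Set.Ioo (0 : ℝ) 1) →
    IsCompact (sets N Xs μ f)
  mem_policy : ∀ (N : ℕ) (Xs : Fin N → Type) [∀ j, Fintype (Xs j)]
    [∀ j, Nonempty (Xs j)] (μ f : ((j : Fin N) → Xs j) → ℝ),
    (∀ x, 0 < μ x) → (∑ x, μ x = 1) → (∀ x, f x ∈ Set.Ioo (0 : ℝ) 1) →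
    sets N Xs μ f ⊆ {dcb | IsCbPolicy dcb}


section AuxIncentive

open Finset

variable {N : ℕ} {Xs : Fin N → Type} [∀ j, Fintype (Xs j)] [∀ j, Nonempty (Xs j)]
variable (Γ : Game N Xs)

lemma proj_surjective : Function.Surjective Γ.proj := by
  intro xY
  refine ⟨fun j => if h : j ∈ Γ.Ysub then xY ⟨j, h⟩ else Classical.arbitrary _, ?_⟩
  funext j
  simp [Game.proj, dif_pos j.2]

lemma lhd_eq_lhdY (x : (j : Fin N) → Xs j) : Γ.lhd x = Γ.lhdY (Γ.proj x) := rfl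

lemma lhdY_pos (xY : (j : Γ.Ysub) → Xs j.1) : 0 < Γ.lhdY xY :=
  div_pos (Γ.pY_pos _ _) (Γ.pY_pos _ _)

lemma pY_u_eq (xY : (j : Γ.Ysub) → Xs j.1) :
    Γ.pY xY Cls.u = Γ.pY xY Cls.q / Γ.lhdY xY := by
  have hq := (Γ.pY_pos xY Cls.q).ne'
  have hu := (Γ.pY_pos xY Cls.u).ne'
  rw [Game.lhdY]
  field_simp

/-- The finset of likelihood values. -/
noncomputable def LVfin : Finset ℝ := Finset.univ.image Γ.lhd

lemma mem_LVfin {v : ℝ} : v ∈ LVfin Γ ↔ v ∈ Γ.LVset := by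
  simp [LVfin, Game.LVset, eq_comm]

lemma LVset_eq_coe : Γ.LVset = ↑(LVfin Γ) := by
  ext v; simp [mem_LVfin]

lemma LVset_finite : Γ.LVset.Finite := by
  rw [LVset_eq_coe]; exact (LVfin Γ).finite_toSet

lemma LVset_nonempty : Γ.LVset.Nonempty :=
  ⟨Γ.lhd (Classical.arbitrary _), ⟨Classical.arbitrary _, rfl⟩⟩

lemma lhdY_mem_LVset (xY : (j : Γ.Ysub) → Xs j.1) : Γ.lhdY xY ∈ Γ.LVset := by
  obtain ⟨x, hx⟩ := proj_surjective Γ xY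
  exact ⟨x, by rw [lhd_eq_lhdY, hx]⟩

lemma lv_pos {v : ℝ} (hv : v ∈ Γ.LVset) : 0 < v := by
  obtain ⟨x, rfl⟩ := hv
  exact lhdY_pos Γ _

lemma lmax_mem : Γ.lmax ∈ Γ.LVset :=
  (LVset_nonempty Γ).csSup_mem (LVset_finite Γ)

lemma lceil_spec {ℓ : ℝ} (hℓ1 : ℓ ≤ Γ.lmax) :
    Γ.lceil ℓ ∈ Γ.LVset ∧ ℓ ≤ Γ.lceil ℓ := by
  have hne : {v | v ∈ Γ.LVset ∧ ℓ ≤ v}.Nonempty := ⟨Γ.lmax, lmax_mem Γ, hℓ1⟩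
  have hfin : {v | v ∈ Γ.LVset ∧ ℓ ≤ v}.Finite :=
    (LVset_finite Γ).subset fun v hv => hv.1
  exact hne.csInf_mem hfin

lemma lceil_pos {ℓ : ℝ} (hℓ1 : ℓ ≤ Γ.lmax) : 0 < Γ.lceil ℓ :=
  lv_pos Γ (lceil_spec Γ hℓ1).1

lemma le_lceilm {ℓ v : ℝ} (hv : v ∈ Γ.LVset) (h : v < Γ.lceil ℓ) :
    v ≤ Γ.lceilm ℓ := by
  have hfin : (insert (0:ℝ) {v | v ∈ Γ.LVset ∧ v < Γ.lceil ℓ}).Finite :=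
    ((LVset_finite Γ).subset fun v hv => hv.1).insert 0
  exact le_csSup hfin.bddAbove (Set.mem_insert_of_mem _ ⟨hv, h⟩)

lemma lceilm_lt {ℓ : ℝ} (hℓ1 : ℓ ≤ Γ.lmax) : Γ.lceilm ℓ < Γ.lceil ℓ := by
  have hfin : (insert (0:ℝ) {v | v ∈ Γ.LVset ∧ v < Γ.lceil ℓ}).Finite :=
    ((LVset_finite Γ).subset fun v hv => hv.1).insert 0
  have hne : (insert (0:ℝ) {v | v ∈ Γ.LVset ∧ v < Γ.lceil ℓ}).Nonempty :=
    ⟨0, Set.mem_insert _ _⟩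
  have hmem := hne.csSup_mem hfin
  rcases Set.mem_insert_iff.1 hmem with h0 | hmem'
  · have h0' : Γ.lceilm ℓ = 0 := h0
    rw [h0']; exact lceil_pos Γ hℓ1
  · exact hmem'.2

/-- Marginal probability of a likelihood fiber on `X_𝒴`. -/
noncomputable def PYfib (y : Cls) (lv : ℝ) : ℝ :=
  ∑ xY ∈ Finset.univ.filter (fun xY => Γ.lhdY xY = lv), Γ.pY xY y

lemma fiber_sum (i : GrpI) (y : Cls) (lv : ℝ) :
    ∑ x ∈ Finset.univ.filter (fun x => Γ.lhd x = lv), Γ.p i x y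
      = PYfib Γ y lv := by
  rw [PYfib,
    ← Finset.sum_fiberwise_of_maps_to (t := Finset.univ.filter (fun xY => Γ.lhdY xY = lv))
      (g := Γ.proj)
      (fun x hx => by
        simp only [Finset.mem_filter, Finset.mem_univ, true_and] at hx ⊢
        rw [← lhd_eq_lhdY]; exact hx)]
  refine Finset.sum_congr rfl fun xY hxY => ?_
  rw [Finset.mem_filter] at hxY
  have hfilter : (Finset.univ.filter (fun x => Γ.lhd x = lv)).filter
        (fun x => Γ.proj x = xY)
      = Finset.univ.filter (fun x : (j : Fin N) → Xs j => Γ.proj x = xY) := by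
    ext x
    simp only [Finset.mem_filter, Finset.mem_univ, true_and]
    constructor
    · rintro ⟨_, h⟩; exact h
    · intro h; exact ⟨by rw [lhd_eq_lhdY, h, hxY.2], h⟩
  rw [hfilter]
  have hsum : ∑ x ∈ Finset.univ.filter (fun x : (j : Fin N) → Xs j => Γ.proj x = xY),
      Γ.p i x y
      = ∑ x ∈ Finset.univ.filter (fun x : (j : Fin N) → Xs j => Γ.proj x = xY),
        Γ.pY xY y * Γ.pC i x := by
    refine Finset.sum_congr rfl fun x hx => ?_
    rw [Finset.mem_filter] at hx
    rw [Game.p, hx.2]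
  rw [hsum, ← Finset.mul_sum]
  have hpc : ∑ x ∈ Finset.univ.filter (fun x : (j : Fin N) → Xs j => Γ.proj x = xY),
      Γ.pC i x = 1 := Γ.pC_sum i xY
  rw [hpc, mul_one]

lemma PYfib_pos (y : Cls) {lv : ℝ} (hlv : lv ∈ Γ.LVset) : 0 < PYfib Γ y lv := by
  obtain ⟨x, hx⟩ := hlv
  refine Finset.sum_pos (fun xY _ => Γ.pY_pos xY y) ⟨Γ.proj x, ?_⟩
  simp only [Finset.mem_filter, Finset.mem_univ, true_and]
  rw [← lhd_eq_lhdY]; exact hx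

lemma PYfib_u {lv : ℝ} : PYfib Γ Cls.u lv = PYfib Γ Cls.q lv / lv := by
  rw [PYfib, PYfib, Finset.sum_div]
  refine Finset.sum_congr rfl fun xY hxY => ?_
  rw [Finset.mem_filter] at hxY
  rw [pY_u_eq, hxY.2]

lemma fiber_d (i : GrpI) (di : ((j : Fin N) → Xs j) → ℝ) {lv : ℝ}
    (hlv : lv ∈ Γ.LVset) :
    ∑ x ∈ Finset.univ.filter (fun x => Γ.lhd x = lv),
        di x * (Γ.p i x Cls.q - Γ.p i x Cls.u)
      = Γ.dcond i di lv * (PYfib Γ Cls.q lv - PYfib Γ Cls.u lv) := by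
  have hlvpos : 0 < lv := lv_pos Γ hlv
  have hDq : ∑ x ∈ Finset.univ.filter (fun x => Γ.lhd x = lv), Γ.p i x Cls.q
      = PYfib Γ Cls.q lv := fiber_sum Γ i Cls.q lv
  have hDqpos : 0 < ∑ x ∈ Finset.univ.filter (fun x => Γ.lhd x = lv), Γ.p i x Cls.q := by
    rw [hDq]; exact PYfib_pos Γ Cls.q hlv
  have hnum : ∑ x ∈ Finset.univ.filter (fun x => Γ.lhd x = lv), Γ.p i x Cls.q * di x
      = Γ.dcond i di lv *
        ∑ x ∈ Finset.univ.filter (fun x => Γ.lhd x = lv), Γ.p i x Cls.q := by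
    rw [Game.dcond, div_mul_cancel₀ _ hDqpos.ne']
  have hstep : ∑ x ∈ Finset.univ.filter (fun x => Γ.lhd x = lv),
        di x * (Γ.p i x Cls.q - Γ.p i x Cls.u)
      = (1 - 1/lv) *
        ∑ x ∈ Finset.univ.filter (fun x => Γ.lhd x = lv), Γ.p i x Cls.q * di x := by
    rw [Finset.mul_sum]
    refine Finset.sum_congr rfl fun x hx => ?_
    rw [Finset.mem_filter] at hx
    have hpu : Γ.p i x Cls.u = Γ.p i x Cls.q / lv := by
      rw [Game.p, Game.p, pY_u_eq, ← hx.2, lhd_eq_lhdY, div_mul_eq_mul_div]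
    rw [hpu]
    field_simp
  rw [hstep, hnum, hDq, PYfib_u]
  field_simp

lemma threshold_regroup (t : ℝ) :
    ∑ lv ∈ (LVfin Γ).filter (fun lv => t < lv),
        (PYfib Γ Cls.q lv - PYfib Γ Cls.u lv)
      = ∑ xY ∈ Finset.univ.filter (fun xY => t < Γ.lhdY xY),
          (Γ.pY xY Cls.q - Γ.pY xY Cls.u) := by
  rw [← Finset.sum_fiberwise_of_maps_to
      (t := (LVfin Γ).filter (fun lv => t < lv)) (g := Γ.lhdY)
      (fun xY hxY => by
        simp only [Finset.mem_filter, Finset.mem_univ, true_and] at hxY ⊢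
        exact ⟨(mem_LVfin Γ).2 (lhdY_mem_LVset Γ xY), hxY⟩)]
  refine Finset.sum_congr rfl fun lv hlv => ?_
  rw [Finset.mem_filter] at hlv
  have hfilter : (Finset.univ.filter (fun xY => t < Γ.lhdY xY)).filter
        (fun xY => Γ.lhdY xY = lv)
      = Finset.univ.filter (fun xY => Γ.lhdY xY = lv) := by
    ext xY
    simp only [Finset.mem_filter, Finset.mem_univ, true_and]
    constructor
    · rintro ⟨_, h⟩; exact h
    · intro h; exact ⟨by rw [h]; exact hlv.2, h⟩
  rw [hfilter, PYfib, PYfib, ← Finset.sum_sub_distrib]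

lemma key_incentive (i : GrpI) (di : ((j : Fin N) → Xs j) → ℝ) (ℓ : ℝ)
    (h : Γ.AssociatedWith i di ℓ) :
    Γ.om * ∑ x, di x * (Γ.p i x Cls.q - Γ.p i x Cls.u) = Γ.WW ℓ := by
  obtain ⟨hℓ0, hℓ1, hd⟩ := h
  set c := Γ.lceil ℓ with hc
  set cm := Γ.lceilm ℓ with hcm
  have hcmem : c ∈ Γ.LVset := (lceil_spec Γ hℓ1).1
  have hcle : ℓ ≤ c := (lceil_spec Γ hℓ1).2
  have hcmlt : cm < c := lceilm_lt Γ hℓ1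
  have hccm : c - cm ≠ 0 := sub_ne_zero.mpr hcmlt.ne'
  set g : ℝ → ℝ := fun lv => PYfib Γ Cls.q lv - PYfib Γ Cls.u lv with hg
  set ww : ℝ → ℝ := fun t =>
    ∑ xY ∈ Finset.univ.filter (fun xY => t < Γ.lhdY xY),
      (Γ.pY xY Cls.q - Γ.pY xY Cls.u) with hww
  -- Step 1: fiberwise decomposition of the total sum
  have h1 : ∑ x, di x * (Γ.p i x Cls.q - Γ.p i x Cls.u)
      = ∑ lv ∈ LVfin Γ, Γ.dcond i di lv * g lv := by
    rw [← Finset.sum_fiberwise_of_maps_to (t := LVfin Γ) (g := Γ.lhd)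
        (fun x _ => Finset.mem_image_of_mem _ (Finset.mem_univ x))
        (fun x => di x * (Γ.p i x Cls.q - Γ.p i x Cls.u))]
    exact Finset.sum_congr rfl fun lv hlv =>
      fiber_d Γ i di ((mem_LVfin Γ).1 hlv)
  -- Step 2: use the associated-with structure
  have h2 : ∀ lv ∈ LVfin Γ, Γ.dcond i di lv * g lv
      = (if c < lv then g lv else 0) +
        (if lv = c then ((c - ℓ) / (c - cm)) * g lv else 0) := by
    intro lv hlv
    have hlv' : lv ∈ Γ.LVset := (mem_LVfin Γ).1 hlv
    rcases lt_trichotomy lv c with hlt | heq | hgt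
    · rw [(hd lv hlv').2.2 hlt, if_neg (by linarith), if_neg (by linarith), zero_mul,
        add_zero]
    · rw [(hd lv hlv').2.1 heq, if_neg (by rw [heq]; exact lt_irrefl c), if_pos heq,
        zero_add]
    · rw [(hd lv hlv').1 hgt, if_pos hgt, if_neg (by linarith), add_zero, one_mul]
  have h3 : ∑ lv ∈ LVfin Γ, Γ.dcond i di lv * g lv
      = (∑ lv ∈ (LVfin Γ).filter (fun lv => c < lv), g lv)
        + ((c - ℓ) / (c - cm)) * g c := by
    rw [Finset.sum_congr rfl h2, Finset.sum_add_distrib, ← Finset.sum_filter]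
    congr 1
    rw [Finset.sum_ite_eq' (LVfin Γ) c (fun lv => ((c - ℓ) / (c - cm)) * g lv),
      if_pos ((mem_LVfin Γ).2 hcmem)]
  -- Step 3: thresholds
  have h4 : ∑ lv ∈ (LVfin Γ).filter (fun lv => c < lv), g lv = ww c :=
    threshold_regroup Γ c
  -- Step 4: the jump at c
  have h5 : g c + ww c = ww cm := by
    have hsub : Finset.univ.filter (fun xY => c < Γ.lhdY xY)
        ⊆ Finset.univ.filter (fun xY => cm < Γ.lhdY xY) := by
      intro xY hxY
      simp only [Finset.mem_filter, Finset.mem_univ, true_and] at hxY ⊢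
      linarith
    have hdiff : (Finset.univ.filter (fun xY => cm < Γ.lhdY xY)) \
          (Finset.univ.filter (fun xY => c < Γ.lhdY xY))
        = Finset.univ.filter (fun xY => Γ.lhdY xY = c) := by
      ext xY
      simp only [Finset.mem_sdiff, Finset.mem_filter, Finset.mem_univ, true_and,
        not_lt]
      constructor
      · rintro ⟨h1', h2'⟩
        rcases lt_or_eq_of_le h2' with hlt | heq
        · exact absurd (le_lceilm Γ (lhdY_mem_LVset Γ xY) hlt) (by linarith)
        · exact heq
      · intro h; rw [h]; exact ⟨hcmlt, le_refl c⟩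
    have hsd := Finset.sum_sdiff (f := fun xY => Γ.pY xY Cls.q - Γ.pY xY Cls.u) hsub
    rw [hdiff] at hsd
    have hgc : g c = ∑ xY ∈ Finset.univ.filter (fun xY => Γ.lhdY xY = c),
        (Γ.pY xY Cls.q - Γ.pY xY Cls.u) := by
      show PYfib Γ Cls.q c - PYfib Γ Cls.u c = _
      rw [PYfib, PYfib, ← Finset.sum_sub_distrib]
    rw [hgc]
    exact hsd
  -- Step 5: assemble
  have hWWval : ∀ t, Γ.WWval t = Γ.om * ww t := fun t => rfl
  rw [h1, h3, h4]
  have hgc : g c = ww cm - ww c := by linarith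
  have hne : ¬ (Γ.lceil ℓ = Γ.lceilm ℓ) := by
    rw [← hc, ← hcm]; exact hcmlt.ne'
  rw [Game.WW, if_neg hne, hWWval, hWWval, ← hc, ← hcm, hgc]
  field_simp
  ring

end AuxIncentive

/-- **Investment incentives under associated policies.** For any group `i` and
any within-group policy `d(i)` associated with a likelihood mixture
`ℓ ∈ [0, l_n]`, the investment incentive equals `WW(ℓ)`:
`ω ∑_x d(i,x)(p(x|i,q) − p(x|i,u)) = WW(ℓ)`.  In particular, under any fair
decision policy the investment incentive is the same for both groups. -/
theorem incentive_eq_WW_of_associated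
    {N : ℕ} {Xs : Fin N → Type} [∀ j, Fintype (Xs j)] [∀ j, Nonempty (Xs j)]
    (Γ : Game N Xs) :
    (∀ (i : GrpI) (di : ((j : Fin N) → Xs j) → ℝ) (ℓ : ℝ),
      Γ.AssociatedWith i di ℓ →
      Γ.om * ∑ x, di x * (Γ.p i x Cls.q - Γ.p i x Cls.u) = Γ.WW ℓ) ∧
    (∀ d : GrpI → ((j : Fin N) → Xs j) → ℝ, Γ.Fair d →
      Γ.om * ∑ x, d GrpI.w x * (Γ.p GrpI.w x Cls.q - Γ.p GrpI.w x Cls.u) =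
        Γ.om * ∑ x, d GrpI.b x * (Γ.p GrpI.b x Cls.q - Γ.p GrpI.b x Cls.u)) := by
  refine ⟨key_incentive Γ, ?_⟩
  rintro d ⟨ℓ, hw, hb⟩
  rw [key_incentive Γ _ _ _ hw, key_incentive Γ _ _ _ hb]
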